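/- With y(t,x) = G(t,z(x)) where G solves G_tt = (ω')²G_zz, velocity u(t,y(t,x)) = y_t(t,x), inverse flow x(t,y), and density ρ(t,y) = d/dy[z(x(t,y))], the velocity field satisfies the Euler equation u_t + u u_y = −(1/ρ)·p_y with pressure p(t,y) = −(ω')²/ρ(t,y) + C for any constant C. -/

import Mathlib

/-- Euler equation (momentum conservation) and equation of state: with
`y(t,x) = G(t,z(x))` where `G` solves `G_tt = (ω')² G_zz` and `G_z > 0`, inverse flow
`x(t,y)`, velocity `u(t,y(t,x)) = y_t(t,x)`, density `ρ(t,y) = d/dy [z(x(t,y))] > 0`,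
and pressure `p = -(ω')²/ρ + C`, the velocity field satisfies
`u_t + u u_y = -(1/ρ) p_y`. -/
theorem stmt_18 (ω' C : ℝ) (hω : 0 < ω')
    (G : ℝ → ℝ → ℝ) (hG : ContDiff ℝ 3 (Function.uncurry G))
    (hwave : ∀ t w : ℝ, deriv (deriv (fun s => G s w)) t
      = ω'^2 * deriv (deriv (fun w' => G t w')) w)
    (hGz : ∀ t w : ℝ, 0 < deriv (G t) w)
    (z : ℝ → ℝ) (hz : ContDiff ℝ 3 z) (hzmono : ∀ a : ℝ, 0 < deriv z a)
    (y : ℝ → ℝ → ℝ) (hy : ∀ t a : ℝ, y t a = G t (z a))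
    (x : ℝ → ℝ → ℝ) (hx : ContDiff ℝ 2 (Function.uncurry x))
    (hinv : ∀ t w : ℝ, y t (x t w) = w)
    (u : ℝ → ℝ → ℝ) (hu : ContDiff ℝ 1 (Function.uncurry u))
    (huv : ∀ t a : ℝ, u t (y t a) = deriv (fun s => y s a) t)
    (ρ : ℝ → ℝ → ℝ) (hρ : ∀ t w : ℝ, ρ t w = deriv (fun w' => z (x t w')) w)
    (hρpos : ∀ t w : ℝ, 0 < ρ t w)
    (p : ℝ → ℝ → ℝ) (hp : ∀ t w : ℝ, p t w = -(ω'^2) / ρ t w + C) :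
    ∀ t w : ℝ, deriv (fun s => u s w) t + u t w * deriv (u t) w
      = -(1 / ρ t w) * deriv (fun w' => p t w') w := by
  intro t w
  set a := x t w with ha
  have hw : y t a = w := hinv t w
  -- regularity of partial maps
  have hGt : ContDiff ℝ 3 (G t) := hG.comp (contDiff_const.prodMk contDiff_id)
  have hGt' : ContDiff ℝ 2 (deriv (G t)) := by
    have h3 : ContDiff ℝ ((2 : ℕ) + 1) (G t) := by exact_mod_cast hGt
    exact_mod_cast (contDiff_succ_iff_deriv.mp h3).2.2
  have hxt2 : ContDiff ℝ 2 (fun w' => x t w') := hx.comp (contDiff_const.prodMk contDiff_id)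
  have hzx2 : ContDiff ℝ 2 (fun w' => z (x t w')) :=
    (hz.of_le (by norm_num)).comp hxt2
  -- derivative of z ∘ x t at any point is ρ
  have hDz : ∀ w' : ℝ, HasDerivAt (fun w'' => z (x t w'')) (ρ t w') w' := by
    intro w'
    rw [hρ]
    exact ((hzx2.differentiable (by norm_num)) w').hasDerivAt
  -- key identity: G_z(t, z(x t w')) * ρ t w' = 1
  have keyA : ∀ w' : ℝ, deriv (G t) (z (x t w')) * ρ t w' = 1 := by
    intro w'
    have h2 : HasDerivAt (G t) (deriv (G t) (z (x t w'))) (z (x t w')) :=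
      ((hGt.differentiable (by norm_num)) _).hasDerivAt
    have h3 : HasDerivAt (fun w'' => G t (z (x t w'')))
        (deriv (G t) (z (x t w')) * ρ t w') w' := h2.comp w' (hDz w')
    have h4 : (fun w'' => G t (z (x t w''))) = fun w'' => w'' :=
      funext fun w'' => (hy t (x t w'')).symm.trans (hinv t w'')
    rw [h4] at h3
    exact h3.unique (hasDerivAt_id w')
  -- rewrite the pressure
  have hp2 : (fun w' => p t w') = fun w' => -(ω'^2) * deriv (G t) (z (x t w')) + C := by
    funext w'
    have hρp : ρ t w' ≠ 0 := (hρpos t w').ne'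
    have hD : deriv (G t) (z (x t w')) = 1 / ρ t w' := by
      rw [eq_div_iff hρp]; exact keyA w'
    rw [hp, hD]; ring
  -- derivative of pressure
  have hGzz : HasDerivAt (deriv (G t)) (deriv (deriv (G t)) (z a)) (z a) :=
    ((hGt'.differentiable (by norm_num)) _).hasDerivAt
  have hpd : HasDerivAt (fun w' => p t w')
      (-(ω'^2) * (deriv (deriv (G t)) (z a) * ρ t w)) w := by
    rw [hp2]
    exact ((hGzz.comp w (hDz w)).const_mul (-(ω'^2))).add_const C
  -- fderiv of u
  have hUd : HasFDerivAt (Function.uncurry u) (fderiv ℝ (Function.uncurry u) (t, w)) (t, w) :=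
    ((hu.differentiable one_ne_zero) (t, w)).hasFDerivAt
  set L := fderiv ℝ (Function.uncurry u) (t, w) with hL
  have hut : HasDerivAt (fun s => u s w) (L (1, 0)) t :=
    hUd.comp_hasDerivAt t (f := fun s => (s, w)) ((hasDerivAt_id t).prodMk (hasDerivAt_const t w))
  have huy : HasDerivAt (u t) (L (0, 1)) w :=
    hUd.comp_hasDerivAt w (f := fun s => (t, s)) ((hasDerivAt_const w t).prodMk (hasDerivAt_id w))
  -- the time flow
  have hFc : ContDiff ℝ 3 (fun s => G s (z a)) :=
    hG.comp (contDiff_id.prodMk contDiff_const)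
  have hFy : (fun s => y s a) = fun s => G s (z a) := funext fun s => hy s a
  have hFd : HasDerivAt (fun s => G s (z a)) (deriv (fun s => G s (z a)) t) t :=
    ((hFc.differentiable (by norm_num)) t).hasDerivAt
  have huval : u t w = deriv (fun s => G s (z a)) t := by
    have := huv t a
    rw [hw, hFy] at this
    exact this
  have hUd2 : HasFDerivAt (Function.uncurry u) L (t, y t a) := by rw [hw]; exact hUd
  have hyd : HasDerivAt (fun s => y s a) (deriv (fun s => G s (z a)) t) t := by
    rw [hFy]; exact hFd
  have hh : HasDerivAt (fun s => u s (y s a))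
      (L (1, deriv (fun s => G s (z a)) t)) t :=
    hUd2.comp_hasDerivAt t (f := fun s => (s, y s a)) ((hasDerivAt_id t).prodMk hyd)
  -- h equals the derivative of the time flow
  have hheq : (fun s => u s (y s a)) = deriv (fun s => G s (z a)) := by
    funext s
    rw [huv s a, hFy]
  have hderiv_h : deriv (fun s => u s (y s a)) t
      = ω'^2 * deriv (deriv (G t)) (z a) := by
    rw [hheq]
    exact hwave t (z a)
  have hLsplit : L (1, deriv (fun s => G s (z a)) t)
      = L (1, 0) + deriv (fun s => G s (z a)) t * L (0, 1) := by
    have : ((1 : ℝ), deriv (fun s => G s (z a)) t)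
        = (1, 0) + deriv (fun s => G s (z a)) t • ((0 : ℝ), (1 : ℝ)) := by
      simp [Prod.ext_iff]
    rw [this, L.map_add, L.map_smul]
    simp [smul_eq_mul]
  have hmain : L (1, 0) + deriv (fun s => G s (z a)) t * L (0, 1)
      = ω'^2 * deriv (deriv (G t)) (z a) := by
    rw [← hLsplit, ← hh.deriv, hderiv_h]
  -- put everything together
  rw [hut.deriv, huy.deriv, hpd.deriv, huval, hmain]
  have hρp : ρ t w ≠ 0 := (hρpos t w).ne'
  field_simp
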